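/- Fix r ≥ 0 and costs c₁, c₂ ≥ 0, and assume the server-cost stability condition ρ^{srv}_r < 1. Then for every x_J ≥ 0, the SkipPredict server-cost mean response time formula for predicted long jobs dominates the external-cost one: M^{PL}_{ext}(x_J, r) ≤ M^{PL}_{srv}(x_J, r). -/

import Mathlib

open MeasureTheory Set Filter

private lemma fub_aux {F : ℝ × ℝ → ℝ}
    (hF : IntegrableOn F ((Ioi (0:ℝ)) ×ˢ (Ioi (0:ℝ)))) :
    (∀ᵐ y ∂(volume.restrict (Ioi (0:ℝ))),
        Integrable (fun x => F (x, y)) (volume.restrict (Ioi (0:ℝ)))) ∧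
      Integrable (fun y => ∫ x in Ioi (0:ℝ), F (x, y)) (volume.restrict (Ioi (0:ℝ))) := by
  have h1 : Integrable F ((volume.restrict (Ioi (0:ℝ))).prod (volume.restrict (Ioi (0:ℝ)))) := by
    rwa [Measure.prod_restrict, ← Measure.volume_eq_prod]
  exact ⟨h1.prod_left_ae, h1.integral_prod_right⟩

private lemma mono_Ioc_aux {II : ℝ → ℝ} (hI : IntegrableOn II (Ioi (0:ℝ)))
    (hpos : ∀ y, 0 ≤ II y) {m t : ℝ} (hm : 0 ≤ m) (hmt : m ≤ t) :
    (∫ y in Ioc (0:ℝ) m, II y) ≤ ∫ y in Ioc (0:ℝ) t, II y := by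
  have hsub1 : Ioc (0:ℝ) m ⊆ Ioi 0 := fun x hx => hx.1
  have hsub2 : Ioc m t ⊆ Ioi (0:ℝ) := fun x hx => lt_of_le_of_lt hm hx.1
  have hdisj : Disjoint (Ioc (0:ℝ) m) (Ioc m t) := by
    rw [Set.disjoint_left]; rintro x hx hx'
    exact absurd hx.2 (not_le.mpr hx'.1)
  have hun : Ioc (0:ℝ) m ∪ Ioc m t = Ioc 0 t := Ioc_union_Ioc_eq_Ioc hm hmt
  rw [← hun, setIntegral_union hdisj measurableSet_Ioc (hI.mono_set hsub1) (hI.mono_set hsub2)]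
  exact le_add_of_nonneg_right (setIntegral_nonneg measurableSet_Ioc fun y _ => hpos y)

private lemma combo_aux {QQ II : ℝ → ℝ} {c : ℝ}
    (hQ : IntegrableOn QQ (Ioi (0:ℝ))) (hI : IntegrableOn II (Ioi (0:ℝ)))
    (hpos : ∀ᵐ y ∂(volume.restrict (Ioi (0:ℝ))), c * QQ y ≤ II y)
    {m t : ℝ} (hm : 0 ≤ m) (hmt : m ≤ t) :
    c * (∫ y in Ioi m, QQ y) + (∫ y in Ioc (0:ℝ) m, II y)
      ≤ c * (∫ y in Ioi t, QQ y) + ∫ y in Ioc (0:ℝ) t, II y := by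
  have hsub1 : Ioc (0:ℝ) m ⊆ Ioi 0 := fun x hx => hx.1
  have hsubm : Ioc m t ⊆ Ioi (0:ℝ) := fun x hx => lt_of_le_of_lt hm hx.1
  have hsubt : Ioi t ⊆ Ioi (0:ℝ) := Ioi_subset_Ioi (hm.trans hmt)
  have hdisj1 : Disjoint (Ioc m t) (Ioi t) := by
    rw [Set.disjoint_left]; rintro x hx hx'
    exact absurd hx.2 (not_le.mpr hx')
  have hdisj2 : Disjoint (Ioc (0:ℝ) m) (Ioc m t) := by
    rw [Set.disjoint_left]; rintro x hx hx'
    exact absurd hx.2 (not_le.mpr hx'.1)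
  have hun1 : Ioc m t ∪ Ioi t = Ioi m := Ioc_union_Ioi_eq_Ioi hmt
  have hun2 : Ioc (0:ℝ) m ∪ Ioc m t = Ioc 0 t := Ioc_union_Ioc_eq_Ioc hm hmt
  have e1 : (∫ y in Ioi m, QQ y) = (∫ y in Ioc m t, QQ y) + ∫ y in Ioi t, QQ y := by
    rw [← hun1, setIntegral_union hdisj1 measurableSet_Ioi (hQ.mono_set hsubm)
      (hQ.mono_set hsubt)]
  have e2 : (∫ y in Ioc (0:ℝ) t, II y) = (∫ y in Ioc 0 m, II y) + ∫ y in Ioc m t, II y := by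
    rw [← hun2, setIntegral_union hdisj2 measurableSet_Ioc (hI.mono_set hsub1)
      (hI.mono_set hsubm)]
  have key : c * (∫ y in Ioc m t, QQ y) ≤ ∫ y in Ioc m t, II y := by
    rw [← integral_const_mul]
    exact integral_mono_ae ((hQ.mono_set hsubm).const_mul c) (hI.mono_set hsubm)
      (ae_restrict_of_ae_restrict_of_subset hsubm hpos)
  rw [e1, e2, mul_add]; linarith

theorem stmt_7
    (f pT : ℝ → ℝ) (g : ℝ → ℝ → ℝ) (lam c₁ c₂ r : ℝ)
    (hf_meas : Measurable f) (hf_nonneg : ∀ x, 0 ≤ f x)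
    (hf_int : IntegrableOn f (Ioi 0))
    (hf_one : (∫ x in Ioi (0:ℝ), f x) = 1)
    (hf_mom1 : IntegrableOn (fun x => x * f x) (Ioi 0))
    (hf_mom2 : IntegrableOn (fun x => x ^ 2 * f x) (Ioi 0))
    (hp_meas : Measurable pT) (hp0 : ∀ x, 0 ≤ pT x) (hp1 : ∀ x, pT x ≤ 1)
    (hg_meas : Measurable fun q : ℝ × ℝ => g q.1 q.2)
    (hg_nonneg : ∀ x y, 0 ≤ g x y)
    (hg_marg : ∀ x ≥ (0:ℝ), (∫ y in Ioi (0:ℝ), g x y) = f x)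
    (hg_int0 : IntegrableOn (fun q : ℝ × ℝ => g q.1 q.2) ((Ioi (0:ℝ)) ×ˢ (Ioi (0:ℝ))))
    (hg_int1 : IntegrableOn (fun q : ℝ × ℝ => q.1 * g q.1 q.2) ((Ioi (0:ℝ)) ×ˢ (Ioi (0:ℝ))))
    (hg_int2 : IntegrableOn (fun q : ℝ × ℝ => q.1 ^ 2 * g q.1 q.2) ((Ioi (0:ℝ)) ×ˢ (Ioi (0:ℝ))))
    (hlam : 0 < lam) (hc₁ : 0 ≤ c₁) (hc₂ : 0 ≤ c₂) (hr : 0 ≤ r)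
    (ρext ρsrv aR : ℝ → ℝ) (MPLext MPLsrv : ℝ → ℝ → ℝ)
    (hρext : ∀ r, ρext r = lam * ((∫ x in Ioi (0:ℝ), x * pT x * f x) + (∫ y in Ioc (0:ℝ) r, ∫ x in Ioi (0:ℝ), (1 - pT x) * x * g x y)))
    (hρsrv : ∀ r, ρsrv r = lam * ((∫ x in Ioi (0:ℝ), (x + c₁) * pT x * f x)
      + (c₁ + c₂) * (∫ y in Ioi r, ∫ x in Ioi (0:ℝ), (1 - pT x) * g x y)
      + (∫ y in Ioc (0:ℝ) r, ∫ x in Ioi (0:ℝ), (1 - pT x) * (x + (c₁ + c₂)) * g x y)))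
    (haR : ∀ r, aR r = ∫ t in Ioi r, ∫ x in Ioi (t - r),
      (1 - pT x) * g x t * (x - (t - r)) ^ 2)
    (hstab : ρsrv r < 1)
    (hMPLext : ∀ xJ r, MPLext xJ r = lam / (2 * (1 - ρext r) ^ 2)
      * ((∫ x in Ioi (0:ℝ), x ^ 2 * pT x * f x) + (∫ y in Ioc (0:ℝ) r, ∫ x in Ioi (0:ℝ), (1 - pT x) * x ^ 2 * g x y) + aR r)
      + ∫ u in Ioc (0:ℝ) xJ, 1 / (1 - ρext (max (r - u) 0)))
    (hMPLsrv : ∀ xJ r, MPLsrv xJ r = lam / (2 * (1 - ρsrv r) ^ 2)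
      * ((∫ x in Ioi (0:ℝ), (x + c₁) ^ 2 * pT x * f x)
        + (c₁ + c₂) ^ 2 * (∫ y in Ioi r, ∫ x in Ioi (0:ℝ), (1 - pT x) * g x y)
        + (∫ y in Ioc (0:ℝ) r, ∫ x in Ioi (0:ℝ), (1 - pT x) * (x + (c₁ + c₂)) ^ 2 * g x y)
        + aR r)
      + ∫ u in Ioc (0:ℝ) xJ, 1 / (1 - ρsrv (max (r - u) 0)))
 :
    ∀ xJ ≥ (0:ℝ), MPLext xJ r ≤ MPLsrv xJ r := by
  have hc : (0:ℝ) ≤ c₁ + c₂ := by linarith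
  have h1p : ∀ x, 0 ≤ 1 - pT x := fun x => by linarith [hp1 x]
  have hsIoi : MeasurableSet (Ioi (0:ℝ) ×ˢ Ioi (0:ℝ)) :=
    measurableSet_Ioi.prod measurableSet_Ioi
  -- measurability on the product
  have mF0 : Measurable fun q : ℝ × ℝ => (1 - pT q.1) * g q.1 q.2 :=
    (measurable_const.sub (hp_meas.comp measurable_fst)).mul hg_meas
  have mF1 : Measurable fun q : ℝ × ℝ => (1 - pT q.1) * q.1 * g q.1 q.2 :=
    (((measurable_const.sub (hp_meas.comp measurable_fst)).mul measurable_fst)).mul hg_meas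
  have mF2 : Measurable fun q : ℝ × ℝ => (1 - pT q.1) * q.1 ^ 2 * g q.1 q.2 :=
    (((measurable_const.sub (hp_meas.comp measurable_fst)).mul
      (measurable_fst.pow_const 2))).mul hg_meas
  -- integrability on the product
  have intF0 : IntegrableOn (fun q : ℝ × ℝ => (1 - pT q.1) * g q.1 q.2)
      ((Ioi (0:ℝ)) ×ˢ (Ioi (0:ℝ))) := by
    refine hg_int0.mono' (mF0.aestronglyMeasurable.restrict) ?_
    refine (ae_restrict_iff' hsIoi).2 (ae_of_all _ ?_)
    rintro ⟨x, y⟩ ⟨hx, hy⟩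
    rw [Real.norm_eq_abs, abs_of_nonneg (mul_nonneg (h1p x) (hg_nonneg x y))]
    nlinarith [hg_nonneg x y, hp0 x]
  have intF1 : IntegrableOn (fun q : ℝ × ℝ => (1 - pT q.1) * q.1 * g q.1 q.2)
      ((Ioi (0:ℝ)) ×ˢ (Ioi (0:ℝ))) := by
    refine hg_int1.mono' (mF1.aestronglyMeasurable.restrict) ?_
    refine (ae_restrict_iff' hsIoi).2 (ae_of_all _ ?_)
    rintro ⟨x, y⟩ ⟨hx, hy⟩
    simp only [Set.mem_Ioi] at hx hy
    rw [Real.norm_eq_abs, abs_of_nonneg (mul_nonneg (mul_nonneg (h1p x) hx.le) (hg_nonneg x y))]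
    nlinarith [hg_nonneg x y, hp0 x, mul_nonneg (mul_nonneg (hp0 x) hx.le) (hg_nonneg x y)]
  have intF2 : IntegrableOn (fun q : ℝ × ℝ => (1 - pT q.1) * q.1 ^ 2 * g q.1 q.2)
      ((Ioi (0:ℝ)) ×ˢ (Ioi (0:ℝ))) := by
    refine hg_int2.mono' (mF2.aestronglyMeasurable.restrict) ?_
    refine (ae_restrict_iff' hsIoi).2 (ae_of_all _ ?_)
    rintro ⟨x, y⟩ ⟨hx, hy⟩
    simp only [Set.mem_Ioi] at hx hy
    rw [Real.norm_eq_abs, abs_of_nonneg (mul_nonneg (mul_nonneg (h1p x) (sq_nonneg x))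
      (hg_nonneg x y))]
    nlinarith [hg_nonneg x y, hp0 x, mul_nonneg (mul_nonneg (hp0 x) (sq_nonneg x)) (hg_nonneg x y)]
  have intF1c : IntegrableOn (fun q : ℝ × ℝ => (1 - pT q.1) * (q.1 + (c₁ + c₂)) * g q.1 q.2)
      ((Ioi (0:ℝ)) ×ˢ (Ioi (0:ℝ))) := by
    have heq : (fun q : ℝ × ℝ => (1 - pT q.1) * (q.1 + (c₁ + c₂)) * g q.1 q.2)
        = fun q : ℝ × ℝ => (1 - pT q.1) * q.1 * g q.1 q.2
            + (c₁ + c₂) * ((1 - pT q.1) * g q.1 q.2) := by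
      funext q; ring
    rw [heq]; exact intF1.add (intF0.const_mul _)
  have intF2c : IntegrableOn (fun q : ℝ × ℝ => (1 - pT q.1) * (q.1 + (c₁ + c₂)) ^ 2 * g q.1 q.2)
      ((Ioi (0:ℝ)) ×ˢ (Ioi (0:ℝ))) := by
    have heq : (fun q : ℝ × ℝ => (1 - pT q.1) * (q.1 + (c₁ + c₂)) ^ 2 * g q.1 q.2)
        = fun q : ℝ × ℝ => (1 - pT q.1) * q.1 ^ 2 * g q.1 q.2
            + (2 * (c₁ + c₂)) * ((1 - pT q.1) * q.1 * g q.1 q.2)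
            + ((c₁ + c₂) ^ 2) * ((1 - pT q.1) * g q.1 q.2) := by
      funext q; ring
    rw [heq]; exact (intF2.add (intF1.const_mul _)).add (intF0.const_mul _)
  -- Fubini consequences
  obtain ⟨ae0, int0⟩ := fub_aux intF0
  obtain ⟨ae1, int1⟩ := fub_aux intF1
  obtain ⟨ae1c, int1c⟩ := fub_aux intF1c
  obtain ⟨ae2, int2⟩ := fub_aux intF2
  obtain ⟨ae2c, int2c⟩ := fub_aux intF2c
  have int0' : IntegrableOn (fun y => ∫ x in Ioi (0:ℝ), (1 - pT x) * g x y) (Ioi (0:ℝ)) := int0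
  have int1' : IntegrableOn (fun y => ∫ x in Ioi (0:ℝ), (1 - pT x) * x * g x y) (Ioi (0:ℝ)) := int1
  have int1c' : IntegrableOn
      (fun y => ∫ x in Ioi (0:ℝ), (1 - pT x) * (x + (c₁ + c₂)) * g x y) (Ioi (0:ℝ)) := int1c
  have int2' : IntegrableOn
      (fun y => ∫ x in Ioi (0:ℝ), (1 - pT x) * x ^ 2 * g x y) (Ioi (0:ℝ)) := int2
  have int2c' : IntegrableOn
      (fun y => ∫ x in Ioi (0:ℝ), (1 - pT x) * (x + (c₁ + c₂)) ^ 2 * g x y) (Ioi (0:ℝ)) := int2c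
  -- a.e. pointwise comparisons of inner integrals (over y in Ioi 0)
  have haeQIs : ∀ᵐ y ∂(volume.restrict (Ioi (0:ℝ))),
      (c₁ + c₂) * (∫ x in Ioi (0:ℝ), (1 - pT x) * g x y)
        ≤ ∫ x in Ioi (0:ℝ), (1 - pT x) * (x + (c₁ + c₂)) * g x y := by
    filter_upwards [ae0, ae1c] with y h0 h1c
    rw [← integral_const_mul]
    refine setIntegral_mono_on (h0.const_mul _) h1c measurableSet_Ioi ?_
    intro x hx
    simp only [Set.mem_Ioi] at hx
    nlinarith [mul_nonneg (mul_nonneg (h1p x) (hg_nonneg x y)) hx.le]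
  have haeIeIs : ∀ᵐ y ∂(volume.restrict (Ioi (0:ℝ))),
      (∫ x in Ioi (0:ℝ), (1 - pT x) * x * g x y)
        ≤ ∫ x in Ioi (0:ℝ), (1 - pT x) * (x + (c₁ + c₂)) * g x y := by
    filter_upwards [ae1, ae1c] with y h1 h1c
    refine setIntegral_mono_on h1 h1c measurableSet_Ioi ?_
    intro x hx
    simp only [Set.mem_Ioi] at hx
    nlinarith [mul_nonneg (h1p x) (hg_nonneg x y)]
  have hae2 : ∀ᵐ y ∂(volume.restrict (Ioi (0:ℝ))),
      (∫ x in Ioi (0:ℝ), (1 - pT x) * x ^ 2 * g x y)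
        ≤ ∫ x in Ioi (0:ℝ), (1 - pT x) * (x + (c₁ + c₂)) ^ 2 * g x y := by
    filter_upwards [ae2, ae2c] with y h2 h2c
    refine setIntegral_mono_on h2 h2c measurableSet_Ioi ?_
    intro x hx
    simp only [Set.mem_Ioi] at hx
    have A := mul_nonneg (h1p x) (hg_nonneg x y)
    nlinarith [mul_nonneg (mul_nonneg hc hx.le) A, mul_nonneg (mul_nonneg hc hc) A]
  -- nonnegativity of inner integrals
  have hQnn : ∀ y, 0 ≤ ∫ x in Ioi (0:ℝ), (1 - pT x) * g x y := fun y =>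
    setIntegral_nonneg measurableSet_Ioi fun x _ => mul_nonneg (h1p x) (hg_nonneg x y)
  have hIenn : ∀ y, 0 ≤ ∫ x in Ioi (0:ℝ), (1 - pT x) * x * g x y := fun y =>
    setIntegral_nonneg measurableSet_Ioi fun x hx =>
      mul_nonneg (mul_nonneg (h1p x) (le_of_lt hx)) (hg_nonneg x y)
  have hIe2nn : ∀ y, 0 ≤ ∫ x in Ioi (0:ℝ), (1 - pT x) * x ^ 2 * g x y := fun y =>
    setIntegral_nonneg measurableSet_Ioi fun x _ =>
      mul_nonneg (mul_nonneg (h1p x) (sq_nonneg x)) (hg_nonneg x y)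
  -- one-dimensional integrabilities
  have int_pf : IntegrableOn (fun x => pT x * f x) (Ioi (0:ℝ)) := by
    refine hf_int.mono' ((hp_meas.mul hf_meas).aestronglyMeasurable.restrict) ?_
    refine (ae_restrict_iff' measurableSet_Ioi).2 (ae_of_all _ fun x _ => ?_)
    rw [Real.norm_eq_abs, abs_of_nonneg (mul_nonneg (hp0 x) (hf_nonneg x))]
    nlinarith [hp0 x, hp1 x, hf_nonneg x]
  have int_xpf : IntegrableOn (fun x => x * pT x * f x) (Ioi (0:ℝ)) := by
    refine hf_mom1.mono' (((measurable_id.mul hp_meas).mul hf_meas).aestronglyMeasurable.restrict) ?_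
    refine (ae_restrict_iff' measurableSet_Ioi).2 (ae_of_all _ fun x hx => ?_)
    simp only [Set.mem_Ioi] at hx
    rw [Real.norm_eq_abs, abs_of_nonneg (mul_nonneg (mul_nonneg hx.le (hp0 x)) (hf_nonneg x))]
    nlinarith [mul_nonneg (mul_nonneg hx.le (hf_nonneg x)) (h1p x)]
  have int_x2pf : IntegrableOn (fun x => x ^ 2 * pT x * f x) (Ioi (0:ℝ)) := by
    refine hf_mom2.mono' ((((measurable_id.pow_const 2).mul hp_meas).mul
      hf_meas).aestronglyMeasurable.restrict) ?_
    refine (ae_restrict_iff' measurableSet_Ioi).2 (ae_of_all _ fun x hx => ?_)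
    rw [Real.norm_eq_abs, abs_of_nonneg (mul_nonneg (mul_nonneg (sq_nonneg x) (hp0 x)) (hf_nonneg x))]
    nlinarith [hp0 x, hp1 x, hf_nonneg x, mul_nonneg (sq_nonneg x) (hf_nonneg x),
      mul_nonneg (mul_nonneg (sq_nonneg x) (hp0 x)) (hf_nonneg x)]
  have int_xc1pf : IntegrableOn (fun x => (x + c₁) * pT x * f x) (Ioi (0:ℝ)) := by
    have heq : (fun x => (x + c₁) * pT x * f x)
        = fun x => x * pT x * f x + c₁ * (pT x * f x) := by funext x; ring
    rw [heq]; exact int_xpf.add (int_pf.const_mul _)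
  have int_xc1sq : IntegrableOn (fun x => (x + c₁) ^ 2 * pT x * f x) (Ioi (0:ℝ)) := by
    have heq : (fun x => (x + c₁) ^ 2 * pT x * f x)
        = fun x => x ^ 2 * pT x * f x + (2 * c₁) * (x * pT x * f x)
            + c₁ ^ 2 * (pT x * f x) := by funext x; ring
    rw [heq]; exact (int_x2pf.add (int_xpf.const_mul _)).add (int_pf.const_mul _)
  -- comparison ρext ≤ ρsrv
  have hsubIoc : ∀ {t : ℝ}, Ioc (0:ℝ) t ⊆ Ioi (0:ℝ) := fun {t} x hx => hx.1
  have hBle : ∀ t, ρext t ≤ ρsrv t := by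
    intro t
    rw [hρext t, hρsrv t]
    refine mul_le_mul_of_nonneg_left ?_ hlam.le
    have e1 : (∫ x in Ioi (0:ℝ), x * pT x * f x) ≤ ∫ x in Ioi (0:ℝ), (x + c₁) * pT x * f x := by
      refine setIntegral_mono_on int_xpf int_xc1pf measurableSet_Ioi fun x hx => ?_
      nlinarith [mul_nonneg (hp0 x) (hf_nonneg x)]
    have e2 : (∫ y in Ioc (0:ℝ) t, ∫ x in Ioi (0:ℝ), (1 - pT x) * x * g x y)
        ≤ ∫ y in Ioc (0:ℝ) t, ∫ x in Ioi (0:ℝ), (1 - pT x) * (x + (c₁ + c₂)) * g x y :=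
      integral_mono_ae (int1'.mono_set hsubIoc) (int1c'.mono_set hsubIoc)
        (ae_restrict_of_ae_restrict_of_subset hsubIoc haeIeIs)
    have e3 : 0 ≤ (c₁ + c₂) * ∫ y in Ioi t, ∫ x in Ioi (0:ℝ), (1 - pT x) * g x y :=
      mul_nonneg hc (setIntegral_nonneg measurableSet_Ioi fun y _ => hQnn y)
    linarith
  -- monotonicity of ρsrv and ρext on [0, ∞)
  have hsrv_mono : ∀ m t, 0 ≤ m → m ≤ t → ρsrv m ≤ ρsrv t := by
    intro m t hm hmt
    rw [hρsrv m, hρsrv t]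
    refine mul_le_mul_of_nonneg_left ?_ hlam.le
    have := combo_aux (c := c₁ + c₂) int0' int1c' haeQIs hm hmt
    linarith
  have hext_mono : ∀ m t, 0 ≤ m → m ≤ t → ρext m ≤ ρext t := by
    intro m t hm hmt
    rw [hρext m, hρext t]
    refine mul_le_mul_of_nonneg_left ?_ hlam.le
    have := mono_Ioc_aux int1' hIenn hm hmt
    linarith
  -- stability facts
  have hstab' : 0 < 1 - ρsrv r := by linarith
  have hms : ∀ u : ℝ, 0 ≤ max (r - u) 0 := fun u => le_max_right _ _
  have hmr : ∀ u : ℝ, 0 ≤ u → max (r - u) 0 ≤ r := fun u hu => max_le (by linarith) hr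
  have hsrv_le : ∀ u : ℝ, 0 ≤ u → ρsrv (max (r - u) 0) ≤ ρsrv r := fun u hu =>
    hsrv_mono _ _ (hms u) (hmr u hu)
  have hpos_s : ∀ u : ℝ, 0 ≤ u → 0 < 1 - ρsrv (max (r - u) 0) := fun u hu => by
    linarith [hsrv_le u hu]
  have hmax_anti : ∀ {u v : ℝ}, u ≤ v → max (r - v) 0 ≤ max (r - u) 0 := fun {u v} huv =>
    max_le_max (by linarith) le_rfl
  have hgs_anti : Antitone fun u => ρsrv (max (r - u) 0) := fun u v huv =>
    hsrv_mono _ _ (hms v) (hmax_anti huv)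
  have hge_anti : Antitone fun u => ρext (max (r - u) 0) := fun u v huv =>
    hext_mono _ _ (hms v) (hmax_anti huv)
  have meas_s : Measurable fun u => 1 / (1 - ρsrv (max (r - u) 0)) :=
    measurable_const.div (measurable_const.sub hgs_anti.measurable)
  have meas_e : Measurable fun u => 1 / (1 - ρext (max (r - u) 0)) :=
    measurable_const.div (measurable_const.sub hge_anti.measurable)
  intro xJ hxJ
  rw [hMPLext xJ r, hMPLsrv xJ r]
  have hbound : ∀ u : ℝ, 0 ≤ u → 1 / (1 - ρsrv (max (r - u) 0)) ≤ 1 / (1 - ρsrv r) :=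
    fun u hu => one_div_le_one_div_of_le hstab' (by linarith [hsrv_le u hu])
  have hint_s : IntegrableOn (fun u => 1 / (1 - ρsrv (max (r - u) 0))) (Ioc (0:ℝ) xJ) := by
    refine Integrable.mono' (g := fun _ => 1 / (1 - ρsrv r))
      (integrableOn_const measure_Ioc_lt_top.ne)
      (meas_s.aestronglyMeasurable.restrict)
      ((ae_restrict_iff' measurableSet_Ioc).2 (ae_of_all _ fun u hu => ?_))
    rw [Real.norm_eq_abs, abs_of_pos (one_div_pos.mpr (hpos_s u hu.1.le))]
    exact hbound u hu.1.le
  have hint_e : IntegrableOn (fun u => 1 / (1 - ρext (max (r - u) 0))) (Ioc (0:ℝ) xJ) := by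
    refine Integrable.mono' (g := fun _ => 1 / (1 - ρsrv r))
      (integrableOn_const measure_Ioc_lt_top.ne)
      (meas_e.aestronglyMeasurable.restrict)
      ((ae_restrict_iff' measurableSet_Ioc).2 (ae_of_all _ fun u hu => ?_))
    have hpe : 0 < 1 - ρext (max (r - u) 0) := by
      linarith [hBle (max (r - u) 0), hpos_s u hu.1.le]
    rw [Real.norm_eq_abs, abs_of_pos (one_div_pos.mpr hpe)]
    refine le_trans (one_div_le_one_div_of_le (hpos_s u hu.1.le)
      (by linarith [hBle (max (r - u) 0)])) (hbound u hu.1.le)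
  refine add_le_add ?_ ?_
  · -- main (first) term
    have hcoef : lam / (2 * (1 - ρext r) ^ 2) ≤ lam / (2 * (1 - ρsrv r) ^ 2) := by
      have h2 : 1 - ρsrv r ≤ 1 - ρext r := by linarith [hBle r]
      have hp2 : (1 - ρsrv r) ^ 2 ≤ (1 - ρext r) ^ 2 := pow_le_pow_left₀ hstab'.le h2 2
      have hd : 0 < 2 * (1 - ρsrv r) ^ 2 := mul_pos two_pos (pow_pos hstab' 2)
      exact div_le_div_of_nonneg_left hlam.le hd (by linarith)
    have hNe_nonneg : 0 ≤ (∫ x in Ioi (0:ℝ), x ^ 2 * pT x * f x)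
        + (∫ y in Ioc (0:ℝ) r, ∫ x in Ioi (0:ℝ), (1 - pT x) * x ^ 2 * g x y) + aR r := by
      have h1 : 0 ≤ ∫ x in Ioi (0:ℝ), x ^ 2 * pT x * f x :=
        setIntegral_nonneg measurableSet_Ioi fun x _ =>
          mul_nonneg (mul_nonneg (sq_nonneg x) (hp0 x)) (hf_nonneg x)
      have h2 : 0 ≤ ∫ y in Ioc (0:ℝ) r, ∫ x in Ioi (0:ℝ), (1 - pT x) * x ^ 2 * g x y :=
        setIntegral_nonneg measurableSet_Ioc fun y _ => hIe2nn y
      have h3 : 0 ≤ aR r := by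
        rw [haR r]
        refine setIntegral_nonneg measurableSet_Ioi fun t _ => ?_
        refine setIntegral_nonneg measurableSet_Ioi fun x _ => ?_
        exact mul_nonneg (mul_nonneg (h1p x) (hg_nonneg x t)) (sq_nonneg _)
      linarith
    have hN_le : (∫ x in Ioi (0:ℝ), x ^ 2 * pT x * f x)
        + (∫ y in Ioc (0:ℝ) r, ∫ x in Ioi (0:ℝ), (1 - pT x) * x ^ 2 * g x y) + aR r
        ≤ (∫ x in Ioi (0:ℝ), (x + c₁) ^ 2 * pT x * f x)
          + (c₁ + c₂) ^ 2 * (∫ y in Ioi r, ∫ x in Ioi (0:ℝ), (1 - pT x) * g x y)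
          + (∫ y in Ioc (0:ℝ) r, ∫ x in Ioi (0:ℝ), (1 - pT x) * (x + (c₁ + c₂)) ^ 2 * g x y)
          + aR r := by
      have e1 : (∫ x in Ioi (0:ℝ), x ^ 2 * pT x * f x)
          ≤ ∫ x in Ioi (0:ℝ), (x + c₁) ^ 2 * pT x * f x := by
        refine setIntegral_mono_on int_x2pf int_xc1sq measurableSet_Ioi fun x hx => ?_
        simp only [Set.mem_Ioi] at hx
        have hpf : 0 ≤ pT x * f x := mul_nonneg (hp0 x) (hf_nonneg x)
        nlinarith [mul_nonneg (mul_nonneg hc₁ hx.le) hpf, mul_nonneg (mul_nonneg hc₁ hc₁) hpf]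
      have e2 : (∫ y in Ioc (0:ℝ) r, ∫ x in Ioi (0:ℝ), (1 - pT x) * x ^ 2 * g x y)
          ≤ ∫ y in Ioc (0:ℝ) r, ∫ x in Ioi (0:ℝ), (1 - pT x) * (x + (c₁ + c₂)) ^ 2 * g x y :=
        integral_mono_ae (int2'.mono_set hsubIoc) (int2c'.mono_set hsubIoc)
          (ae_restrict_of_ae_restrict_of_subset hsubIoc hae2)
      have e3 : 0 ≤ (c₁ + c₂) ^ 2 * ∫ y in Ioi r, ∫ x in Ioi (0:ℝ), (1 - pT x) * g x y :=
        mul_nonneg (sq_nonneg _) (setIntegral_nonneg measurableSet_Ioi fun y _ => hQnn y)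
      linarith
    have hcoef_nonneg : 0 ≤ lam / (2 * (1 - ρext r) ^ 2) := by positivity
    refine mul_le_mul hcoef hN_le hNe_nonneg (div_nonneg hlam.le (by positivity))
  · -- waiting-time (second) term
    refine setIntegral_mono_on hint_e hint_s measurableSet_Ioc fun u hu => ?_
    exact one_div_le_one_div_of_le (hpos_s u hu.1.le) (by linarith [hBle (max (r - u) 0)])
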